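/- Let A be a k-algebra, a₁, …, aₙ a finite family of elements of A, and M a left A-module. Then the k-linear map R : M ⊗ M → M ⊗ M defined by R(l ⊗ m) = ∑_{i=1}^{n} l ⊗ (a_i · m) for all l, m ∈ M is a solution of the Long equation. -/
import Mathlib


open TensorProduct

noncomputable section

variable {k M : Type*} [Field k] [AddCommGroup M] [Module k M]

/-- The flip map τ : M ⊗ M → M ⊗ M, τ(m ⊗ n) = n ⊗ m. -/
def tau (k M : Type*) [Field k] [AddCommGroup M] [Module k M] :
    M ⊗[k] M →ₗ[k] M ⊗[k] M := (TensorProduct.comm k M M).toLinearMap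

/-- R¹² = R ⊗ id on M ⊗ (M ⊗ M) (transported along the associator). -/
def R12 (R : M ⊗[k] M →ₗ[k] M ⊗[k] M) :
    M ⊗[k] (M ⊗[k] M) →ₗ[k] M ⊗[k] (M ⊗[k] M) :=
  (TensorProduct.assoc k M M M).toLinearMap ∘ₗ
    TensorProduct.map R LinearMap.id ∘ₗ (TensorProduct.assoc k M M M).symm.toLinearMap

/-- R²³ = id ⊗ R on M ⊗ (M ⊗ M). -/
def R23 (R : M ⊗[k] M →ₗ[k] M ⊗[k] M) :
    M ⊗[k] (M ⊗[k] M) →ₗ[k] M ⊗[k] (M ⊗[k] M) :=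
  TensorProduct.map LinearMap.id R

/-- R¹³ = (id ⊗ τ)(R ⊗ id)(id ⊗ τ) on M ⊗ (M ⊗ M). -/
def R13 (R : M ⊗[k] M →ₗ[k] M ⊗[k] M) :
    M ⊗[k] (M ⊗[k] M) →ₗ[k] M ⊗[k] (M ⊗[k] M) :=
  TensorProduct.map LinearMap.id (tau k M) ∘ₗ R12 R ∘ₗ
    TensorProduct.map LinearMap.id (tau k M)

/-- R is a solution of the Long equation: R¹²R¹³ = R¹³R¹² and R¹²R²³ = R²³R¹². -/
def IsLongSolution (R : M ⊗[k] M →ₗ[k] M ⊗[k] M) : Prop :=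
  R12 R ∘ₗ R13 R = R13 R ∘ₗ R12 R ∧ R12 R ∘ₗ R23 R = R23 R ∘ₗ R12 R

end

section helpers
variable {k : Type*} [Field k] {A : Type*} [Ring A] [Algebra k A]
    {M : Type*} [AddCommGroup M] [Module k M] [Module A M]
    [IsScalarTower k A M] [SMulCommClass A k M] (n : ℕ) (a : Fin n → A)

local notation "S" => (∑ i : Fin n, TensorProduct.map (LinearMap.id : M →ₗ[k] M)
      (Algebra.lsmul k k M (a i) : M →ₗ[k] M))

lemma hS (m p : M) : S (m ⊗ₜ[k] p) = ∑ i : Fin n, m ⊗ₜ[k] (a i • p) := by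
  simp [LinearMap.sum_apply]

lemma h12 (l m p : M) :
    R12 S (l ⊗ₜ[k] (m ⊗ₜ[k] p)) = ∑ i : Fin n, l ⊗ₜ[k] ((a i • m) ⊗ₜ[k] p) := by
  simp only [R12, LinearMap.comp_apply, LinearEquiv.coe_coe, TensorProduct.assoc_symm_tmul,
    TensorProduct.map_tmul, hS, TensorProduct.sum_tmul, map_sum, TensorProduct.assoc_tmul,
    LinearMap.id_coe, id_eq]

lemma h23 (l m p : M) :
    R23 S (l ⊗ₜ[k] (m ⊗ₜ[k] p)) = ∑ i : Fin n, l ⊗ₜ[k] (m ⊗ₜ[k] (a i • p)) := by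
  simp only [R23, TensorProduct.map_tmul, hS, TensorProduct.tmul_sum, LinearMap.id_coe, id_eq]

lemma h13 (l m p : M) :
    R13 S (l ⊗ₜ[k] (m ⊗ₜ[k] p)) = ∑ i : Fin n, l ⊗ₜ[k] (m ⊗ₜ[k] (a i • p)) := by
  simp only [R13, tau, LinearMap.comp_apply, TensorProduct.map_tmul, LinearEquiv.coe_coe,
    TensorProduct.comm_tmul, LinearMap.id_coe, id_eq, h12, map_sum, TensorProduct.tmul_sum]

end helpers

theorem long_equation_module_family
    {k : Type*} [Field k] {A : Type*} [Ring A] [Algebra k A]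
    {M : Type*} [AddCommGroup M] [Module k M] [Module A M]
    [IsScalarTower k A M] [SMulCommClass A k M]
    (n : ℕ) (a : Fin n → A) :
    IsLongSolution (∑ i : Fin n, TensorProduct.map (LinearMap.id : M →ₗ[k] M)
      (Algebra.lsmul k k M (a i) : M →ₗ[k] M)) := by
  have key : ∀ F G : M ⊗[k] (M ⊗[k] M) →ₗ[k] M ⊗[k] (M ⊗[k] M),
      (∀ l m p : M, F (l ⊗ₜ[k] (m ⊗ₜ[k] p)) = ∑ i : Fin n, l ⊗ₜ[k] ((a i • m) ⊗ₜ[k] p)) →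
      (∀ l m p : M, G (l ⊗ₜ[k] (m ⊗ₜ[k] p)) = ∑ i : Fin n, l ⊗ₜ[k] (m ⊗ₜ[k] (a i • p))) →
      F ∘ₗ G = G ∘ₗ F := by
    intro F G hF hG
    apply TensorProduct.ext'
    intro l x
    induction x using TensorProduct.induction_on with
    | zero => simp
    | add x y hx hy => simp only [TensorProduct.tmul_add, map_add, hx, hy]
    | tmul m p =>
      simp only [LinearMap.comp_apply, hF, hG, map_sum, TensorProduct.tmul_sum]
      rw [Finset.sum_comm]
  refine ⟨key _ _ (h12 n a) (h13 n a), key _ _ (h12 n a) (h23 n a)⟩
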